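/- Let X and Z be complex Banach spaces, T ∈ B(X), B ∈ B(Z), and assume qT = Bq for some injective q ∈ B(X,Z) whose range qX is closed in Z. Assume further that 0 ∈ σ(T), that T* is injective, and that B* has dense range in Z*. Let W denote the closure in Z* of B*(ker q*). Then the map B̃ : Z*/ker q* → Z*/W defined by B̃(z* + ker q*) = B*z* + W is a well-defined bounded linear operator whose range is dense in Z*/W but is not closed in Z*/W. -/

import Mathlib

open NormedSpace Filter Topology Set

noncomputable section

/-- The Banach-space adjoint (dual map) of a bounded operator:
`(dualOp q) g = g ∘ q`. -/
noncomputable def dualOp {E F : Type*} [NormedAddCommGroup E] [NormedSpace ℂ E]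
    [NormedAddCommGroup F] [NormedSpace ℂ F] (q : E →L[ℂ] F) :
    StrongDual ℂ F →L[ℂ] StrongDual ℂ E :=
  (ContinuousLinearMap.compL ℂ E F ℂ).flip q

namespace AuxIDNR

lemma dualOp_apply {E F : Type*} [NormedAddCommGroup E] [NormedSpace ℂ E]
    [NormedAddCommGroup F] [NormedSpace ℂ F] (q : E →L[ℂ] F) (g : StrongDual ℂ F) (x : E) :
    dualOp q g x = g (q x) := rfl

/-- The quotient projection as a continuous linear map. -/
lemma exists_mk_clm {M : Type*} [SeminormedAddCommGroup M] [NormedSpace ℂ M]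
    (S : Submodule ℂ M) :
    ∃ g : M →L[ℂ] (M ⧸ S), ∀ m, g m = Submodule.Quotient.mk m := by
  refine ⟨LinearMap.mkContinuous S.mkQ 1 fun m => ?_, fun m => rfl⟩
  simpa using Submodule.Quotient.norm_mk_le S m

/-- A continuous linear map vanishing on a submodule lifts continuously
to the quotient. -/
lemma exists_clm_lift {M N : Type*} [SeminormedAddCommGroup M] [NormedSpace ℂ M]
    [SeminormedAddCommGroup N] [NormedSpace ℂ N]
    (S : Submodule ℂ M) (f : M →L[ℂ] N) (hf : ∀ m ∈ S, f m = 0) :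
    ∃ g : (M ⧸ S) →L[ℂ] N, ∀ m, g (Submodule.Quotient.mk m) = f m := by
  have hle : S ≤ LinearMap.ker (f : M →ₗ[ℂ] N) := fun m hm => by
    simpa using hf m hm
  set ℓ := S.liftQ (f : M →ₗ[ℂ] N) hle with hℓdef
  have hb : ∀ v : M ⧸ S, ‖ℓ v‖ ≤ ‖f‖ * ‖v‖ := by
    intro v
    refine le_of_forall_pos_le_add fun ε hε => ?_
    have hδ : 0 < ε / (‖f‖ + 1) := by positivity
    obtain ⟨m, hm, hmn⟩ := Submodule.Quotient.norm_mk_lt v hδ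
    have h1 : ℓ v = f m := by rw [← hm]; rfl
    have h2 : ‖f m‖ ≤ ‖f‖ * ‖m‖ := f.le_opNorm m
    have h3 : ‖f‖ * ‖m‖ ≤ ‖f‖ * (‖v‖ + ε / (‖f‖ + 1)) :=
      mul_le_mul_of_nonneg_left hmn.le (norm_nonneg f)
    have h4 : ‖f‖ * (ε / (‖f‖ + 1)) ≤ ε := by
      rw [mul_div_assoc']
      rw [div_le_iff₀ (by positivity)]
      nlinarith [norm_nonneg f, hε.le]
    rw [h1]
    nlinarith [norm_nonneg f]
  exact ⟨LinearMap.mkContinuous ℓ ‖f‖ hb, fun m => rfl⟩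

variable {X Z : Type*} [NormedAddCommGroup X] [NormedSpace ℂ X]
  [NormedAddCommGroup Z] [NormedSpace ℂ Z]

/-- If `q` is injective with closed range, its dual map is surjective. -/
lemma dualOp_surjective [CompleteSpace X] [CompleteSpace Z] (q : X →L[ℂ] Z)
    (hqinj : Function.Injective q) (hqcl : IsClosed (Set.range q)) :
    Function.Surjective (dualOp q) := by
  intro f
  set R : Submodule ℂ Z := LinearMap.range q.toLinearMap with hRdef
  have hRcl : IsClosed (R : Set Z) := by
    have : (R : Set Z) = Set.range q := by
      ext z; simp [hRdef, LinearMap.mem_range]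
    rw [this]; exact hqcl
  haveI : CompleteSpace R := hRcl.completeSpace_coe
  set q' : X →L[ℂ] R := q.codRestrict R (fun x => LinearMap.mem_range_self _ x) with hq'def
  have hker : q'.ker = ⊥ := by
    rw [LinearMap.ker_eq_bot]
    intro a b hab
    apply hqinj
    have : (q' a : Z) = (q' b : Z) := by exact congrArg Subtype.val hab
    simpa [hq'def] using this
  have hrange : q'.range = ⊤ := by
    rw [LinearMap.range_eq_top]
    rintro ⟨z, hz⟩
    obtain ⟨x, hx⟩ := hz
    exact ⟨x, Subtype.ext (by simpa [hq'def] using hx)⟩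
  set e := ContinuousLinearEquiv.ofBijective q' hker hrange with hedef
  set φ : R →L[ℂ] ℂ := f.comp (e.symm : R →L[ℂ] X) with hφdef
  obtain ⟨g, hg, -⟩ := exists_extension_norm_eq R φ
  refine ⟨g, ?_⟩
  ext x
  have h1 : dualOp q g x = g (q x) := rfl
  have h2 : (q' x : Z) = q x := rfl
  have h3 : g (q x) = φ (q' x) := by rw [← h2]; exact hg (q' x)
  have h4 : e x = q' x := by
    rw [hedef]; exact congrFun (ContinuousLinearEquiv.coeFn_ofBijective q' hker hrange) x
  have h5 : φ (q' x) = f (e.symm (q' x)) := rfl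
  rw [h1, h3, h5, ← h4, e.symm_apply_apply]

/-- If the dual of `T` is bijective and `X` is complete, then `T` is a unit,
contradicting `0 ∈ σ(T)`. -/
lemma contra_of_dual_bijective [CompleteSpace X] (T : X →L[ℂ] X)
    (hT0 : (0 : ℂ) ∈ spectrum ℂ T)
    (hTinj : Function.Injective (dualOp T))
    (hTsurj : Function.Surjective (dualOp T)) : False := by
  obtain ⟨C, hC, hpre⟩ := ContinuousLinearMap.exists_preimage_norm_le (dualOp T) hTsurj
  -- T is bounded below
  have hbb : ∀ x : X, ‖x‖ ≤ C * ‖T x‖ := by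
    intro x
    refine norm_le_dual_bound ℂ x (by positivity) fun f => ?_
    obtain ⟨g, hg, hgn⟩ := hpre f
    have h1 : f x = g (T x) := by rw [← hg]; rfl
    rw [h1]
    calc ‖g (T x)‖ ≤ ‖g‖ * ‖T x‖ := g.le_opNorm _
      _ ≤ (C * ‖f‖) * ‖T x‖ :=
        mul_le_mul_of_nonneg_right hgn (norm_nonneg _)
      _ = C * ‖T x‖ * ‖f‖ := by ring
  have hCnn : ((C.toNNReal : NNReal) : ℝ) = C := Real.coe_toNNReal C hC.le
  have hanti : AntilipschitzWith C.toNNReal T :=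
    T.antilipschitz_of_bound (K := C.toNNReal) fun x => by rw [hCnn]; exact hbb x
  have hinjT : Function.Injective T := hanti.injective
  have hclr : IsClosed (Set.range T) := hanti.isClosed_range T.uniformContinuous
  -- T has dense range, since dualOp T is injective
  set S : Submodule ℂ X := (LinearMap.range T.toLinearMap).topologicalClosure with hSdef
  haveI hScl : IsClosed (S : Set X) := Submodule.isClosed_topologicalClosure _
  have hStop : S = ⊤ := by
    by_contra hne
    obtain ⟨x, hx⟩ : ∃ x : X, x ∉ S := by
      by_contra h
      push_neg at h
      exact hne (Submodule.eq_top_iff'.mpr h)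
    have hmkne : (Submodule.Quotient.mk x : X ⧸ S) ≠ 0 := by
      simpa [Submodule.Quotient.mk_eq_zero] using hx
    obtain ⟨g, hgn, hgx⟩ := exists_dual_vector ℂ (Submodule.Quotient.mk x : X ⧸ S) (norm_ne_zero_iff.mpr hmkne)
    obtain ⟨mkS, hmkS⟩ := exists_mk_clm S
    set f : StrongDual ℂ X := g.comp mkS with hfdef
    have hfT : dualOp T f = 0 := by
      ext y
      have hTy : T y ∈ S := (LinearMap.range T.toLinearMap).le_topologicalClosure
        (LinearMap.mem_range_self _ y)
      have : dualOp T f y = g (Submodule.Quotient.mk (T y)) := by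
        rw [dualOp_apply, hfdef]
        simp [hmkS]
      rw [this]
      have : (Submodule.Quotient.mk (T y) : X ⧸ S) = 0 :=
        (Submodule.Quotient.mk_eq_zero S).mpr hTy
      simp [this]
    have hf0 : f = 0 := hTinj (by rw [hfT]; simp)
    have : f x = g (Submodule.Quotient.mk x) := by
      rw [hfdef]; simp [hmkS]
    rw [hf0] at this
    have hg0 : g (Submodule.Quotient.mk x) = 0 := by rw [← this]; simp
    have hc : (‖(Submodule.Quotient.mk x : X ⧸ S)‖ : ℂ) = 0 := hgx.symm.trans hg0
    have hnorm0 : ‖(Submodule.Quotient.mk x : X ⧸ S)‖ = 0 := by exact_mod_cast hc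
    exact hmkne (norm_eq_zero.mp hnorm0)
  have hsurjT : Function.Surjective T := by
    intro y
    have hy : y ∈ S := hStop ▸ Submodule.mem_top
    have : y ∈ closure (Set.range T) := by
      have h1 : ((LinearMap.range T.toLinearMap).topologicalClosure : Set X) =
          closure ((LinearMap.range T.toLinearMap : Submodule ℂ X) : Set X) :=
        Submodule.topologicalClosure_coe _
      have h2 : ((LinearMap.range T.toLinearMap : Submodule ℂ X) : Set X) = Set.range T := by
        ext z; simp [LinearMap.mem_range]
      have := hy
      rw [hSdef] at this
      have h3 : y ∈ closure ((LinearMap.range T.toLinearMap : Submodule ℂ X) : Set X) := by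
        rw [← h1]; exact this
      rwa [h2] at h3
    rwa [hclr.closure_eq] at this
  have hunit : IsUnit T :=
    ContinuousLinearMap.isUnit_iff_bijective.mpr ⟨hinjT, hsurjT⟩
  rw [spectrum.mem_iff] at hT0
  exact hT0 (by simpa using hunit.neg)

end AuxIDNR

set_option maxHeartbeats 1000000 in
theorem induced_operator_dense_nonclosed_range {X Z : Type*}
    [NormedAddCommGroup X] [NormedSpace ℂ X] [CompleteSpace X]
    [NormedAddCommGroup Z] [NormedSpace ℂ Z] [CompleteSpace Z]
    (T : X →L[ℂ] X) (B : Z →L[ℂ] Z)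
    (q : X →L[ℂ] Z) (hqinj : Function.Injective q)
    (hqcl : IsClosed (Set.range q))
    (hq : ∀ x : X, q (T x) = B (q x))
    (hT0 : (0 : ℂ) ∈ spectrum ℂ T)
    (hTinj : Function.Injective (dualOp T))
    (hBdense : Dense (Set.range (dualOp B))) :
    ∃ Bt : (StrongDual ℂ Z ⧸ LinearMap.ker (dualOp q).toLinearMap) →L[ℂ]
        (StrongDual ℂ Z ⧸
          (Submodule.map (dualOp B).toLinearMap (LinearMap.ker (dualOp q).toLinearMap)).topologicalClosure),
      (∀ g : StrongDual ℂ Z, Bt (Submodule.Quotient.mk g) = Submodule.Quotient.mk (dualOp B g)) ∧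
      Dense (Set.range Bt) ∧ ¬ IsClosed (Set.range Bt) := by
  classical
  set K : Submodule ℂ (StrongDual ℂ Z) := LinearMap.ker (dualOp q).toLinearMap with hKdef
  set W : Submodule ℂ (StrongDual ℂ Z) := (Submodule.map (dualOp B).toLinearMap K).topologicalClosure with hWdef
  -- intertwining at the dual level: q* ∘ B* = T* ∘ q*
  have hcomm : ∀ g : StrongDual ℂ Z, dualOp q (dualOp B g) = dualOp T (dualOp q g) := by
    intro g
    ext x
    have h1 : dualOp q (dualOp B g) x = g (B (q x)) := rfl
    have h2 : dualOp T (dualOp q g) x = g (q (T x)) := rfl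
    rw [h1, h2, hq x]
  -- B* maps K into K, hence W ≤ K
  have hBK : ∀ g ∈ K, dualOp B g ∈ K := by
    intro g hg
    have hg0 : dualOp q g = 0 := hg
    show dualOp q (dualOp B g) = 0
    rw [hcomm g, hg0]
    simp
  have hKcl : IsClosed (K : Set (StrongDual ℂ Z)) := by
    have : (K : Set (StrongDual ℂ Z)) = (dualOp q) ⁻¹' {0} := by
      ext g; simp [hKdef, LinearMap.mem_ker]
    rw [this]
    exact isClosed_singleton.preimage (dualOp q).continuous
  have hWK : W ≤ K := by
    apply Submodule.topologicalClosure_minimal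
    · rintro g ⟨h, hh, rfl⟩
      exact hBK h hh
    · exact hKcl
  -- construct Bt
  obtain ⟨mkW, hmkW⟩ := AuxIDNR.exists_mk_clm W
  have hker0 : ∀ g ∈ K, (mkW.comp (dualOp B)) g = 0 := by
    intro g hg
    have hmem : dualOp B g ∈ W :=
      (Submodule.map (dualOp B).toLinearMap K).le_topologicalClosure ⟨g, hg, rfl⟩
    have : mkW (dualOp B g) = Submodule.Quotient.mk (dualOp B g) := hmkW _
    simp only [ContinuousLinearMap.comp_apply]
    rw [this]
    exact (Submodule.Quotient.mk_eq_zero W).mpr hmem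
  obtain ⟨Bt, hBt⟩ := AuxIDNR.exists_clm_lift K (mkW.comp (dualOp B)) hker0
  have hBt' : ∀ g : StrongDual ℂ Z,
      Bt (Submodule.Quotient.mk g) = Submodule.Quotient.mk (dualOp B g) := by
    intro g
    rw [hBt g]
    simp only [ContinuousLinearMap.comp_apply]
    exact hmkW _
  have hrange : Set.range Bt = Set.range (fun g : StrongDual ℂ Z =>
      (Submodule.Quotient.mk (dualOp B g) : StrongDual ℂ Z ⧸ W)) := by
    ext v
    constructor
    · rintro ⟨u, rfl⟩
      obtain ⟨g, rfl⟩ := Submodule.Quotient.mk_surjective K u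
      exact ⟨g, (hBt' g).symm⟩
    · rintro ⟨g, rfl⟩
      exact ⟨Submodule.Quotient.mk g, hBt' g⟩
  have hdense : Dense (Set.range Bt) := by
    rw [hrange]
    have h1 : DenseRange (dualOp B) := hBdense
    have h2 : DenseRange (mkW : StrongDual ℂ Z →L[ℂ] StrongDual ℂ Z ⧸ W) := by
      apply Function.Surjective.denseRange
      intro v
      obtain ⟨g, rfl⟩ := Submodule.Quotient.mk_surjective W v
      exact ⟨g, hmkW g⟩
    have hcomp : DenseRange (⇑mkW ∘ ⇑(dualOp B)) := h2.comp h1 mkW.continuous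
    have heq : (⇑mkW ∘ ⇑(dualOp B)) = (fun g : StrongDual ℂ Z =>
        (Submodule.Quotient.mk (dualOp B g) : StrongDual ℂ Z ⧸ W)) := by
      funext g; exact hmkW _
    rwa [heq] at hcomp
  refine ⟨Bt, hBt', hdense, ?_⟩
  · intro hcl
    have hsurjBt : Function.Surjective Bt := by
      intro v
      have : v ∈ closure (Set.range Bt) := hdense v
      rwa [hcl.closure_eq] at this
    -- then dualOp T is surjective
    have hqsurj : Function.Surjective (dualOp q) :=
      AuxIDNR.dualOp_surjective q hqinj hqcl
    have hTsurj : Function.Surjective (dualOp T) := by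
      intro f
      obtain ⟨z, hz⟩ := hqsurj f
      obtain ⟨u, hu⟩ := hsurjBt (Submodule.Quotient.mk z)
      obtain ⟨h, rfl⟩ := Submodule.Quotient.mk_surjective K u
      rw [hBt' h] at hu
      have hdiff : dualOp B h - z ∈ W := by
        exact (Submodule.Quotient.eq W).mp hu
      have hdiffK : dualOp B h - z ∈ K := hWK hdiff
      refine ⟨dualOp q h, ?_⟩
      have h1 : dualOp q (dualOp B h - z) = 0 := hdiffK
      have h2 : dualOp q (dualOp B h) = dualOp q z := by
        have := h1
        rw [map_sub, sub_eq_zero] at this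
        exact this
      rw [← hcomm h, h2, hz]
    exact AuxIDNR.contra_of_dual_bijective T hT0 hTinj hTsurj
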